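/- arXiv:2404.04784 — 3 statements merged into one kernel-verified Lean document; each statement's English description precedes it below -/
import Mathlib

section
/- If a group G is finitely generated by n elements, then its Alexander invariant B(G) = G'/G'' is a finitely generated module over the group ring ℤ[G_ab]; in fact it is generated by at most n(n-1)/2 elements. -/
open scoped commutatorElement

/-- If `G` is generated by `n` elements, then the Alexander invariant `B(G) = G'/G''` is a
finitely generated `ℤ[G_ab]`-module, generated by at most `n(n-1)/2` elements.  Expressed
group-theoretically: there are at most `n(n-1)/2` elements of `G'` such that `G'` is
generated by `G''` together with all `G`-conjugates of these elements (i.e. the classes of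
these elements generate `G'/G''` over `ℤ[G_ab]`, the abelianization acting by conjugation). -/
theorem stmt5 {G : Type*} [Group G] (n : ℕ) (T : Finset G) (hcard : T.card = n)
    (hT : Subgroup.closure (T : Set G) = ⊤) :
    ∃ S : Finset G, (S : Set G) ⊆ (derivedSeries G 1 : Subgroup G) ∧
      S.card ≤ n * (n - 1) / 2 ∧
      Subgroup.closure ((derivedSeries G 2 : Subgroup G) ∪
        {y : G | ∃ g : G, ∃ x ∈ S, y = g * x * g⁻¹}) = derivedSeries G 1 := by
  classical
  set r := @WellOrderingRel G with hr
  have htri : ∀ a b : G, a ≠ b → r a b ∨ r b a := by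
    intro a b hab
    rcases trichotomous_of r a b with h | h | h
    · exact Or.inl h
    · exact absurd h hab
    · exact Or.inr h
  have hasymm : ∀ a b : G, r a b → ¬ r b a := fun a b h h' => asymm h h'
  set A := T.offDiag.filter (fun p => r p.1 p.2) with hA
  set S := A.image (fun p => ⁅p.1, p.2⁆) with hS
  -- commutators of pairs of T lie in K
  have hSsub : (S : Set G) ⊆ (derivedSeries G 1 : Subgroup G) := by
    intro x hx
    simp only [hS, Finset.coe_image, Set.mem_image] at hx
    obtain ⟨p, _, rfl⟩ := hx
    exact Subgroup.commutator_mem_commutator (Subgroup.mem_top _) (Subgroup.mem_top _)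
  -- cardinality bound
  have hcardS : S.card ≤ n * (n - 1) / 2 := by
    have h1 : S.card ≤ A.card := Finset.card_image_le
    set B := T.offDiag.filter (fun p => r p.2 p.1) with hB
    have hdisj : Disjoint A B := by
      rw [Finset.disjoint_left]
      intro p hpA hpB
      rw [hA, Finset.mem_filter] at hpA
      rw [hB, Finset.mem_filter] at hpB
      exact hasymm _ _ hpA.2 hpB.2
    have himg : A.image Prod.swap ⊆ B := by
      intro p hp
      obtain ⟨q, hq, rfl⟩ := Finset.mem_image.mp hp
      rw [hA, Finset.mem_filter] at hq
      rw [hB, Finset.mem_filter]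
      refine ⟨?_, hq.2⟩
      rw [Finset.mem_offDiag] at hq ⊢
      exact ⟨hq.1.2.1, hq.1.1, fun h => hq.1.2.2 h.symm⟩
    have hAB : A.card ≤ B.card := by
      calc A.card = (A.image Prod.swap).card :=
            (Finset.card_image_of_injective _ Prod.swap_injective).symm
        _ ≤ B.card := Finset.card_le_card himg
    have hsum : A.card + B.card ≤ n * (n - 1) := by
      have := Finset.card_union_le A B
      have h2 : (A ∪ B).card = A.card + B.card := Finset.card_union_of_disjoint hdisj
      have h3 : A ∪ B ⊆ T.offDiag := by
        intro p hp
        rcases Finset.mem_union.mp hp with h | h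
        · exact (Finset.mem_filter.mp h).1
        · exact (Finset.mem_filter.mp h).1
      have h4 := Finset.card_le_card h3
      rw [h2] at h4
      rw [Finset.offDiag_card, hcard] at h4
      have h5 : n * (n - 1) = n * n - n := by rw [Nat.mul_sub, mul_one]
      omega
    omega
  refine ⟨S, hSsub, hcardS, ?_⟩
  set K := Subgroup.closure ((derivedSeries G 2 : Subgroup G) ∪
      {y : G | ∃ g : G, ∃ x ∈ S, y = g * x * g⁻¹}) with hK
  -- K ≤ derivedSeries G 1
  have hKle : K ≤ derivedSeries G 1 := by
    rw [hK, Subgroup.closure_le]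
    rintro x (hx | ⟨g, y, hy, rfl⟩)
    · exact (@Subgroup.commutator_le_left G _ (derivedSeries G 1) (derivedSeries G 1)
        (derivedSeries_normal G 1)) hx
    · exact (derivedSeries_normal G 1).conj_mem y (hSsub hy) g
  -- K is normal
  have hKnormal : K.Normal := by
    constructor
    intro x hx g
    rw [hK] at hx ⊢
    induction hx using Subgroup.closure_induction with
    | mem y hy =>
      rcases hy with hy | ⟨h, z, hz, rfl⟩
      · exact Subgroup.subset_closure
          (Or.inl ((derivedSeries_normal G 2).conj_mem y hy g))
      · refine Subgroup.subset_closure (Or.inr ⟨g * h, z, hz, ?_⟩)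
        group
    | one => simpa using Subgroup.one_mem _
    | mul y z _ _ hy hz =>
      have : g * (y * z) * g⁻¹ = (g * y * g⁻¹) * (g * z * g⁻¹) := by group
      rw [this]; exact Subgroup.mul_mem _ hy hz
    | inv y _ hy =>
      have : g * y⁻¹ * g⁻¹ = (g * y * g⁻¹)⁻¹ := by group
      rw [this]; exact Subgroup.inv_mem _ hy
  -- commutators of generators lie in K
  have hcommK : ∀ s ∈ T, ∀ t ∈ T, ⁅s, t⁆ ∈ K := by
    intro s hs t ht
    by_cases hst : s = t
    · subst hst; simpa [commutatorElement_def] using Subgroup.one_mem K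
    rcases htri s t hst with h | h
    · have : ⁅s, t⁆ ∈ S := by
        rw [hS]; exact Finset.mem_image.mpr ⟨(s, t),
          Finset.mem_filter.mpr ⟨Finset.mem_offDiag.mpr ⟨hs, ht, hst⟩, h⟩, rfl⟩
      exact Subgroup.subset_closure (Or.inr ⟨1, _, this, by group⟩)
    · have : ⁅t, s⁆ ∈ S := by
        rw [hS]; exact Finset.mem_image.mpr ⟨(t, s),
          Finset.mem_filter.mpr ⟨Finset.mem_offDiag.mpr ⟨ht, hs, Ne.symm hst⟩, h⟩, rfl⟩
      have h2 : ⁅t, s⁆ ∈ K := Subgroup.subset_closure (Or.inr ⟨1, _, this, by group⟩)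
      have h3 : ⁅s, t⁆ = ⁅t, s⁆⁻¹ := (commutatorElement_inv t s).symm
      rw [h3]; exact Subgroup.inv_mem _ h2
  -- the quotient G/K is abelian
  letI := hKnormal
  set π : G →* G ⧸ K := QuotientGroup.mk' K with hπ
  have hπsurj : Function.Surjective π := QuotientGroup.mk'_surjective K
  have hTgen : Subgroup.closure (π '' (T : Set G)) = ⊤ := by
    rw [← MonoidHom.map_closure, hT, ← MonoidHom.range_eq_map,
      MonoidHom.range_eq_top_of_surjective _ hπsurj]
  have hTcomm : ∀ a ∈ π '' (T : Set G), ∀ b ∈ π '' (T : Set G), Commute a b := by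
    rintro a ⟨s, hs, rfl⟩ b ⟨t, ht, rfl⟩
    rw [← commutatorElement_eq_one_iff_commute, ← map_commutatorElement,
      hπ, QuotientGroup.mk'_apply, QuotientGroup.eq_one_iff]
    exact hcommK s hs t ht
  have habelian : ∀ x y : G ⧸ K, Commute x y := by
    have hgen : ∀ x : G ⧸ K, x ∈ Subgroup.closure (π '' (T : Set G)) := by
      intro x; rw [hTgen]; exact Subgroup.mem_top x
    have step : ∀ a ∈ π '' (T : Set G), ∀ x : G ⧸ K, Commute a x := by
      intro a ha x
      induction hgen x using Subgroup.closure_induction with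
      | mem y hy => exact hTcomm a ha y hy
      | one => exact Commute.one_right a
      | mul y z _ _ hy hz => exact Commute.mul_right hy hz
      | inv y _ hy => exact Commute.inv_right hy
    intro x y
    induction hgen x using Subgroup.closure_induction with
    | mem z hz => exact step z hz y
    | one => exact Commute.one_left y
    | mul z w _ _ hz hw => exact Commute.mul_left hz hw
    | inv z _ hz => exact Commute.inv_left hz
  -- derivedSeries G 1 ≤ K
  have hleK : derivedSeries G 1 ≤ K := by
    rw [derivedSeries_one, commutator_def, Subgroup.commutator_le]
    intro a _ b _
    have : π ⁅a, b⁆ = 1 := by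
      rw [map_commutatorElement, commutatorElement_eq_one_iff_commute]
      exact habelian _ _
    rwa [hπ, QuotientGroup.mk'_apply, QuotientGroup.eq_one_iff] at this
  exact le_antisymm hKle hleK
end

section
/- Let F_n be the free group of rank n, with Alexander invariant B(F_n) identified with the kernel of the ℤ[t₁^±,...,t_n^±]-linear map Rⁿ → R sending the i-th basis vector to t_i - 1. Then B(F_n) is separated in the I-adic topology, where I = (t₁-1, ..., t_n-1): the intersection of all IᵏB(F_n) for k ≥ 1 is zero. -/
open Finsupp

/-- The Laurent polynomial ring `R = ℤ[t₁^±, …, t_n^±] = ℤ[ℤⁿ]`, realized as the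
monoid algebra of the additive group `Fin n →₀ ℤ` over `ℤ`. -/
noncomputable abbrev LaurentZn (n : ℕ) := AddMonoidAlgebra ℤ (Fin n →₀ ℤ)

/-- The monomial `t i` in `LaurentZn n`. -/
noncomputable def tvar {n : ℕ} (i : Fin n) : LaurentZn n :=
  AddMonoidAlgebra.single (Finsupp.single i 1) 1

/-- The boundary map `∂₁ : Rⁿ → R`, sending the `i`-th basis vector to `t_i - 1`. -/
noncomputable def delOne (n : ℕ) : (Fin n → LaurentZn n) →ₗ[LaurentZn n] LaurentZn n where
  toFun x := ∑ i, x i * (tvar i - 1)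
  map_add' x y := by simp [add_mul, Finset.sum_add_distrib]
  map_smul' r x := by simp [Finset.mul_sum, mul_assoc]

/-- The Alexander invariant `B(F_n)` of the free group of rank `n`, identified with the
kernel of the `R`-linear map `Rⁿ → R`, `e_i ↦ t_i - 1`, is separated in the `I`-adic
topology, where `I = (t₁ - 1, …, t_n - 1)` is the augmentation ideal: the intersection
of all `Iᵏ · B(F_n)` for `k ≥ 1` is zero. -/
theorem stmt10 (n : ℕ) :
    (⨅ (k : ℕ) (_ : 1 ≤ k),
      (Ideal.span (Set.range fun i : Fin n => tvar i - 1)) ^ k • LinearMap.ker (delOne n)) =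
      (⊥ : Submodule (LaurentZn n) (Fin n → LaurentZn n)) := by
  haveI : AddMonoid.FG (Fin n →₀ ℤ) :=
    AddGroup.fg_iff_addMonoid_fg.mp (Module.Finite.iff_addGroup_fg.mp inferInstance)
  haveI : IsNoetherianRing (LaurentZn n) :=
    Algebra.FiniteType.isNoetherianRing ℤ (LaurentZn n)
  haveI : IsDomain (LaurentZn n) := NoZeroDivisors.to_isDomain _
  set I : Ideal (LaurentZn n) := Ideal.span (Set.range fun i : Fin n => tvar i - 1) with hIdef
  set N : Submodule (LaurentZn n) (Fin n → LaurentZn n) := LinearMap.ker (delOne n) with hNdef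
  set ε : LaurentZn n →ₐ[ℤ] ℤ := AddMonoidAlgebra.lift ℤ ℤ (Fin n →₀ ℤ) 1 with hε
  have hεt : ∀ i : Fin n, ε (tvar i - 1) = 0 := by
    intro i
    have h1 : ε (tvar i) = 1 := by
      simp [hε, tvar, AddMonoidAlgebra.lift_single]
    simp [map_sub, h1]
  have hI : I ≠ ⊤ := by
    intro h
    have h1 : (1 : LaurentZn n) ∈ I := h ▸ Submodule.mem_top
    have hle : I ≤ RingHom.ker (ε : LaurentZn n →+* ℤ) := by
      rw [hIdef, Ideal.span_le]
      rintro _ ⟨i, rfl⟩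
      simpa [RingHom.mem_ker] using hεt i
    have := hle h1
    simp [RingHom.mem_ker] at this
  haveI : Module.Finite (LaurentZn n) N :=
    ⟨(Submodule.fg_top _).mpr (IsNoetherian.noetherian _)⟩
  rw [eq_bot_iff]
  intro x hx
  simp only [Submodule.mem_iInf] at hx
  have hxk : ∀ k : ℕ, 1 ≤ k → x ∈ I ^ k • N := hx
  have hxN : x ∈ N := by
    have := hxk 1 le_rfl
    rw [pow_one] at this
    exact Submodule.smul_le.mpr (fun r hr m hm => Submodule.smul_mem _ _ hm) this
  set x' : N := ⟨x, hxN⟩ with hx'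
  have hx'mem : x' ∈ (⨅ i : ℕ, I ^ i • ⊤ : Submodule (LaurentZn n) N) := by
    rw [Submodule.mem_iInf]
    intro i
    rcases Nat.eq_zero_or_pos i with rfl | hi
    · simp
    · have hmap : Submodule.map N.subtype (I ^ i • ⊤) = I ^ i • N := by
        rw [Submodule.map_smul'', Submodule.map_subtype_top]
      have : x ∈ Submodule.map N.subtype (I ^ i • ⊤) := hmap ▸ hxk i hi
      obtain ⟨y, hy, hyx⟩ := this
      have : y = x' := Subtype.ext hyx
      exact this ▸ hy
  obtain ⟨r, hr⟩ := (Ideal.mem_iInf_smul_pow_eq_bot_iff I x').mp hx'mem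
  have hrx : (r : LaurentZn n) • x = x := congrArg Subtype.val hr
  have hsub : ((1 : LaurentZn n) - r) • x = 0 := by
    rw [sub_smul, one_smul, hrx, sub_self]
  have hne : (1 : LaurentZn n) - r ≠ 0 := by
    intro h
    apply hI
    have : (1 : LaurentZn n) ∈ I := by
      have : (1 : LaurentZn n) = r := by linear_combination h
      rw [this]; exact r.2
    exact (Ideal.eq_top_iff_one I).mpr this
  rcases smul_eq_zero.mp hsub with h | h
  · exact absurd h hne
  · exact h
end

section
/- For any group G, the I-adic filtration on the Alexander invariant B(G) = G'/G'' coincides, up to a shift of 2, with the lower central series filtration on the maximal metabelian quotient G/G'': namely, Iᵏ · B(G) = γ_{k+2}(G/G'') for all k ≥ 0, where I = I(G_ab) is the augmentation ideal of ℤ[G_ab] acting on B(G) via conjugation. -/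
open Subgroup
open scoped IsMulCommutative commutatorElement

instance (G : Type*) [Group G] (n : ℕ) : (derivedSeries G n).Normal :=
  derivedSeries_normal G n

/-- The maximal metabelian quotient `G/G''` of a group `G`. -/
abbrev Metab (G : Type*) [Group G] := G ⧸ derivedSeries G 2

theorem derivedSeries_metab_two (G : Type*) [Group G] :
    derivedSeries (Metab G) 2 = ⊥ := by
  apply le_antisymm _ bot_le
  have hsurj : Function.Surjective (QuotientGroup.mk' (derivedSeries G 2)) :=
    QuotientGroup.mk'_surjective _
  refine le_trans (derivedSeries_le_map_derivedSeries hsurj 2) ?_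
  rintro x ⟨k, hk, rfl⟩
  exact (Subgroup.mem_bot).mpr ((QuotientGroup.eq_one_iff k).mpr hk)

/-- The derived subgroup of `G/G''` is abelian. -/
instance commutator_metab_isCommutative (G : Type*) [Group G] :
    IsMulCommutative ↥(commutator (Metab G)) := by
  constructor
  constructor
  rintro ⟨a, ha⟩ ⟨b, hb⟩
  have h : ⁅a, b⁆ ∈ ⁅derivedSeries (Metab G) 1, derivedSeries (Metab G) 1⁆ :=
    Subgroup.commutator_mem_commutator
      (by rwa [derivedSeries_one]) (by rwa [derivedSeries_one])
  rw [← derivedSeries_succ, derivedSeries_metab_two, Subgroup.mem_bot] at h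
  ext
  exact commutatorElement_eq_one_iff_mul_comm.mp h

/-- The group ring `ℤ[G_ab]` (realized via the abelianization of `G/G''`, which is
naturally isomorphic to `G_ab`). -/
noncomputable abbrev GroupRingAb (G : Type*) [Group G] :=
  MonoidAlgebra ℤ (Abelianization (Metab G))

/-- The Alexander invariant `B(G) = G'/G''`, realized as the derived subgroup of the
maximal metabelian quotient `G/G''`, written additively. -/
abbrev AlexInv (G : Type*) [Group G] := Additive ↥(commutator (Metab G))

/-- The augmentation ideal `I = I(G_ab) ⊆ ℤ[G_ab]`. -/
noncomputable def augIdealAb (G : Type*) [Group G] : Ideal (GroupRingAb G) :=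
  RingHom.ker ((MonoidAlgebra.lift ℤ ℤ (Abelianization (Metab G)) 1)).toRingHom

/-- A module structure of `ℤ[G_ab]` on `B(G) = G'/G''` is the conjugation one. -/
def IsConjModule (G : Type*) [Group G] [Module (GroupRingAb G) (AlexInv G)] : Prop :=
  ∀ (g : Metab G) (a : ↥(commutator (Metab G))) (h : g * ↑a * g⁻¹ ∈ commutator (Metab G)),
    (MonoidAlgebra.of ℤ (Abelianization (Metab G)) (Abelianization.of g)) •
        (Additive.ofMul a) =
      Additive.ofMul (⟨g * ↑a * g⁻¹, h⟩ : ↥(commutator (Metab G)))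

section MasseyAux

open MonoidAlgebra

variable {G : Type*} [Group G]

/-- Surjectivity of `Abelianization.of` on the metabelian quotient. -/
lemma metab_abelianization_of_surjective :
    Function.Surjective (Abelianization.of : Metab G → Abelianization (Metab G)) :=
  fun a => QuotientGroup.induction_on a fun g => ⟨g, rfl⟩

lemma of_sub_one_mem_augIdeal (g : Abelianization (Metab G)) :
    of ℤ (Abelianization (Metab G)) g - 1 ∈ augIdealAb G := by
  rw [augIdealAb, RingHom.mem_ker]
  simp

lemma one_sub_of_mem_augIdeal (g : Abelianization (Metab G)) :
    1 - of ℤ (Abelianization (Metab G)) g ∈ augIdealAb G := by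
  simpa using neg_mem (of_sub_one_mem_augIdeal (G := G) g)

lemma augIdeal_le_span :
    augIdealAb G ≤
      Ideal.span (Set.range fun g : Abelianization (Metab G) =>
        of ℤ (Abelianization (Metab G)) g - 1) := by
  set eps := ((MonoidAlgebra.lift ℤ ℤ (Abelianization (Metab G))) 1).toRingHom with heps
  intro r hr
  have key : ∀ r : GroupRingAb G,
      r - algebraMap ℤ _ (eps r) ∈
        Ideal.span (Set.range fun g : Abelianization (Metab G) =>
          of ℤ (Abelianization (Metab G)) g - 1) := by
    intro r
    induction r using MonoidAlgebra.induction_on with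
    | of g =>
        have : eps (of ℤ _ g) = 1 := by simp [heps]
        rw [this, map_one]
        exact Ideal.subset_span ⟨g, rfl⟩
    | add f g hf hg =>
        have : f + g - algebraMap ℤ _ (eps (f + g)) =
            (f - algebraMap ℤ _ (eps f)) + (g - algebraMap ℤ _ (eps g)) := by
          rw [map_add, map_add]; ring
        rw [this]; exact add_mem hf hg
    | smul n f hf =>
        have h2 : eps (n • f) = n • eps f := map_zsmul eps n f
        have h1 : n • f - algebraMap ℤ _ (eps (n • f)) =
            n • (f - algebraMap ℤ _ (eps f)) := by
          rw [smul_sub, h2, map_zsmul]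
        rw [h1]; exact zsmul_mem hf n
  have h := key r
  have hr0 : eps r = 0 := by rwa [augIdealAb, RingHom.mem_ker] at hr
  rw [hr0] at h
  simpa using h

lemma lcs_le_commutator_metab (k : ℕ) :
    Subgroup.lowerCentralSeries (⊤ : Subgroup (Metab G)) (k + 1) ≤ commutator (Metab G) :=
  Subgroup.lowerCentralSeries_antitone ⊤ (Nat.le_add_left 1 k)

variable [Module (GroupRingAb G) (AlexInv G)]

/-- The conjugation formula for an arbitrary representative. -/
lemma conj_smul (hconj : IsConjModule G) (g : Metab G) (x : ↥(commutator (Metab G))) :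
    (of ℤ (Abelianization (Metab G)) (Abelianization.of g)) • (Additive.ofMul x) =
      Additive.ofMul (⟨g * ↑x * g⁻¹,
        (Subgroup.commutator_normal ⊤ ⊤).conj_mem _ x.2 g⟩ : ↥(commutator (Metab G))) :=
  hconj g x _

/-- The submodule of the Alexander invariant corresponding to `γ_{k+2}`. -/
def lcsSubmodule (hconj : IsConjModule G) (k : ℕ) :
    Submodule (GroupRingAb G) (AlexInv G) where
  carrier := {x | (↑(Additive.toMul x) : Metab G) ∈ Subgroup.lowerCentralSeries (⊤ : Subgroup (Metab G)) (k + 1)}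
  add_mem' {x y} hx hy := by
    simp only [Set.mem_setOf_eq, toMul_add, Subgroup.coe_mul] at *
    exact mul_mem hx hy
  zero_mem' := by
    simp only [Set.mem_setOf_eq, toMul_zero, OneMemClass.coe_one]
    exact one_mem _
  smul_mem' c x hx := by
    simp only [Set.mem_setOf_eq] at *
    induction c using MonoidAlgebra.induction_on with
    | of g =>
        obtain ⟨g', rfl⟩ := metab_abelianization_of_surjective g
        rw [show x = Additive.ofMul (Additive.toMul x) from rfl, conj_smul hconj]
        exact (Subgroup.lowerCentralSeries_normal ⊤ (k + 1)).conj_mem _ hx g'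
    | add f g hf hg =>
        rw [add_smul, toMul_add, Subgroup.coe_mul]
        exact mul_mem hf hg
    | smul n f hf =>
        rw [smul_assoc, toMul_zsmul, SubgroupClass.coe_zpow]
        exact zpow_mem hf n

lemma mem_lcsSubmodule {hconj : IsConjModule G} {k : ℕ} {x : AlexInv G} :
    x ∈ lcsSubmodule hconj k ↔
      (↑(Additive.toMul x) : Metab G) ∈ Subgroup.lowerCentralSeries (⊤ : Subgroup (Metab G)) (k + 1) :=
  Iff.rfl

lemma dir1 (hconj : IsConjModule G) (k : ℕ) :
    ((augIdealAb G) ^ k • ⊤ : Submodule (GroupRingAb G) (AlexInv G)) ≤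
      lcsSubmodule hconj k := by
  induction k with
  | zero =>
      intro x _
      rw [mem_lcsSubmodule, Subgroup.top_lowerCentralSeries_one]
      exact (Additive.toMul x).2
  | succ k ih =>
      have hrw : ((augIdealAb G) ^ (k + 1) • ⊤ : Submodule (GroupRingAb G) (AlexInv G)) =
          augIdealAb G • ((augIdealAb G) ^ k • ⊤ : Submodule (GroupRingAb G) (AlexInv G)) := by
        rw [pow_succ, mul_comm, ← Ideal.smul_eq_mul, Submodule.smul_assoc]
      rw [hrw]
      refine Submodule.smul_le.mpr fun r hr n hn => ?_
      have hn' : (↑(Additive.toMul n) : Metab G) ∈ Subgroup.lowerCentralSeries (⊤ : Subgroup (Metab G)) (k + 1) :=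
        ih hn
      have hr' := augIdeal_le_span hr
      refine Submodule.span_induction ?_ ?_ ?_ ?_ hr'
      · rintro _ ⟨g, rfl⟩
        obtain ⟨g', rfl⟩ := metab_abelianization_of_surjective g
        rw [mem_lcsSubmodule]
        show (↑(Additive.toMul ((of ℤ _ (Abelianization.of g') - 1) • n)) : Metab G) ∈ _
        rw [sub_smul, one_smul, show n = Additive.ofMul (Additive.toMul n) from rfl,
          conj_smul hconj]
        have : Additive.ofMul (⟨g' * ↑(Additive.toMul n) * g'⁻¹,
              (Subgroup.commutator_normal ⊤ ⊤).conj_mem _ (Additive.toMul n).2 g'⟩ :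
                ↥(commutator (Metab G)))
            - Additive.ofMul (Additive.toMul n)
            = Additive.ofMul ((⟨g' * ↑(Additive.toMul n) * g'⁻¹,
                (Subgroup.commutator_normal ⊤ ⊤).conj_mem _ (Additive.toMul n).2 g'⟩ :
                  ↥(commutator (Metab G))) / Additive.toMul n) := by
          rw [ofMul_div]
        rw [this]
        show ((↑(⟨g' * ↑(Additive.toMul n) * g'⁻¹, _⟩ / Additive.toMul n :
            ↥(commutator (Metab G)))) : Metab G) ∈ _
        have hcoe : ((↑(⟨g' * ↑(Additive.toMul n) * g'⁻¹,
            (Subgroup.commutator_normal ⊤ ⊤).conj_mem _ (Additive.toMul n).2 g'⟩ /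
              Additive.toMul n : ↥(commutator (Metab G)))) : Metab G)
            = ⁅g', (↑(Additive.toMul n) : Metab G)⁆ := by
          rw [commutatorElement_def]
          push_cast
          rw [div_eq_mul_inv]
        rw [hcoe]
        have hmem : ⁅g', (↑(Additive.toMul n) : Metab G)⁆ ∈
            ⁅(⊤ : Subgroup (Metab G)), Subgroup.lowerCentralSeries (⊤ : Subgroup (Metab G)) (k + 1)⁆ :=
          Subgroup.commutator_mem_commutator (Subgroup.mem_top g') hn'
        rw [Subgroup.commutator_comm] at hmem
        exact hmem
      · rw [show ((0 : GroupRingAb G) • n) = 0 from zero_smul _ n]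
        exact (lcsSubmodule hconj (k + 1)).zero_mem
      · intro x y _ _ hx hy
        rw [add_smul]
        exact (lcsSubmodule hconj (k + 1)).add_mem hx hy
      · intro a x _ hx
        rw [smul_eq_mul, mul_smul]
        exact (lcsSubmodule hconj (k + 1)).smul_mem a hx

lemma dir2 (hconj : IsConjModule G) (k : ℕ) :
    ∀ m, m ∈ Subgroup.lowerCentralSeries (⊤ : Subgroup (Metab G)) (k + 1) →
      ∀ hc : m ∈ commutator (Metab G),
        Additive.ofMul (⟨m, hc⟩ : ↥(commutator (Metab G))) ∈
          ((augIdealAb G) ^ k • ⊤ : Submodule (GroupRingAb G) (AlexInv G)) := by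
  induction k with
  | zero =>
      intro m _ hc
      rw [pow_zero, Ideal.one_eq_top, Submodule.top_smul]
      exact Submodule.mem_top
  | succ k ih =>
      intro m hm
      rw [Subgroup.lowerCentralSeries_succ, Subgroup.commutator_def] at hm
      have hrw : ((augIdealAb G) ^ (k + 1) • ⊤ : Submodule (GroupRingAb G) (AlexInv G)) =
          augIdealAb G • ((augIdealAb G) ^ k • ⊤ : Submodule (GroupRingAb G) (AlexInv G)) := by
        rw [pow_succ, mul_comm, ← Ideal.smul_eq_mul, Submodule.smul_assoc]
      have hcl : ∀ x, x ∈ closure { x | ∃ p ∈ Subgroup.lowerCentralSeries (⊤ : Subgroup (Metab G)) (k + 1),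
            ∃ q ∈ (⊤ : Subgroup (Metab G)), p * q * p⁻¹ * q⁻¹ = x } →
          x ∈ commutator (Metab G) := by
        intro x hx
        have hx' : x ∈ Subgroup.lowerCentralSeries (⊤ : Subgroup (Metab G)) (k + 2) := by
          rw [Subgroup.lowerCentralSeries_succ, Subgroup.commutator_def]; exact hx
        exact lcs_le_commutator_metab (k + 1) hx'
      refine Subgroup.closure_induction
        (p := fun m _ => ∀ hc : m ∈ commutator (Metab G),
          Additive.ofMul (⟨m, hc⟩ : ↥(commutator (Metab G))) ∈
            ((augIdealAb G) ^ (k + 1) • ⊤ : Submodule (GroupRingAb G) (AlexInv G)))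
        ?_ ?_ ?_ ?_ hm
      · rintro x ⟨p, hp, q, -, hx⟩ hc
        rw [commutatorElement_def] at hx
        subst hx
        have hpc : p ∈ commutator (Metab G) := lcs_le_commutator_metab k hp
        have h1 := ih p hp hpc
        have key : (1 - of ℤ (Abelianization (Metab G)) (Abelianization.of q)) •
              (Additive.ofMul (⟨p, hpc⟩ : ↥(commutator (Metab G))))
            = Additive.ofMul (⟨p * q * p⁻¹ * q⁻¹, hc⟩ : ↥(commutator (Metab G))) := by
          rw [sub_smul, one_smul, conj_smul hconj, ← ofMul_div]
          congr 1
          ext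
          push_cast
          rw [div_eq_mul_inv]
          group
        rw [← key, hrw]
        exact Submodule.smul_mem_smul (one_sub_of_mem_augIdeal _) h1
      · intro hc
        rw [show (⟨1, hc⟩ : ↥(commutator (Metab G))) = 1 from rfl, ofMul_one]
        exact zero_mem _
      · intro x y hx hy ihx ihy hc
        have hcx := hcl x hx
        have hcy := hcl y hy
        rw [show (⟨x * y, hc⟩ : ↥(commutator (Metab G))) = ⟨x, hcx⟩ * ⟨y, hcy⟩ from rfl,
          ofMul_mul]
        exact add_mem (ihx hcx) (ihy hcy)
      · intro x hx ihx hc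
        have hcx := hcl x hx
        rw [show (⟨x⁻¹, hc⟩ : ↥(commutator (Metab G))) = (⟨x, hcx⟩ : ↥(commutator (Metab G)))⁻¹
            from rfl, ofMul_inv]
        exact neg_mem (ihx hcx)

end MasseyAux

/-- Massey's correspondence: for any group `G`, the `I`-adic filtration on the Alexander
invariant `B(G) = G'/G''` (a `ℤ[G_ab]`-module via conjugation) coincides, up to a shift of
two, with the lower central series of the maximal metabelian quotient `G/G''`:
`Iᵏ·B(G) = γ_{k+2}(G/G'')`.  (Here `γ_{k+2}` in the paper's indexing, with `γ₁ = G`, is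
`lowerCentralSeries _ (k+1)` in Mathlib's indexing.) -/
theorem stmt18 (G : Type*) [Group G] [Module (GroupRingAb G) (AlexInv G)]
    (hconj : IsConjModule G) (k : ℕ) (a : ↥(commutator (Metab G))) :
    Additive.ofMul a ∈ ((augIdealAb G) ^ k • ⊤ : Submodule (GroupRingAb G) (AlexInv G)) ↔
      (↑a : Metab G) ∈ Subgroup.lowerCentralSeries (⊤ : Subgroup (Metab G)) (k + 1) := by
  constructor
  · intro h
    have h2 := dir1 hconj k h
    rw [mem_lcsSubmodule] at h2
    simpa using h2
  · intro h
    have h2 := dir2 hconj k (↑a) h a.2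
    simpa using h2
end
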